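/- arXiv:1903.09299 — 5 statements merged into one kernel-verified Lean document; each statement's English description precedes it below -/
import Mathlib

section
/- Let A ≥ A' > 0 and σ > 0. Let P : ℝ → ℝ be a Borel-measurable even function with P(0) = 0 and P(A') ≥ 0, such that the map x ↦ P(x)/x² is nondecreasing on (0, A'] and P(x) = P(A') for all x ∈ [A', A]. Then for every Borel probability measure μ on ℝ with μ([-A, A]) = 1 and ∫ x² dμ(x) ≤ σ², one has ∫ P(x) dμ(x) ≤ min(σ²/A'², 1) · P(A'). -/
open MeasureTheory

/-- Upper-bound part of the maximum WPT theorem (Theorem 5): for any feasible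
input distribution on `[-A, A]` with average power at most `σ²`, the average
harvested power is at most `min (σ²/A'², 1) · P(A')`. -/
theorem max_WPT_upper_bound
    (A A' σ : ℝ) (hA' : 0 < A') (hA'A : A' ≤ A) (hσ : 0 < σ)
    (P : ℝ → ℝ) (hPmeas : Measurable P)
    (hPeven : ∀ x : ℝ, P (-x) = P x)
    (hP0 : P 0 = 0) (hPA' : 0 ≤ P A')
    (hratio : ∀ x y : ℝ, 0 < x → x ≤ y → y ≤ A' → P x / x ^ 2 ≤ P y / y ^ 2)
    (hsat : ∀ x ∈ Set.Icc A' A, P x = P A')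
    (μ : Measure ℝ) [IsProbabilityMeasure μ]
    (hsupp : μ (Set.Icc (-A) A) = 1)
    (hAP : (∫ x, x ^ 2 ∂μ) ≤ σ ^ 2) :
    (∫ x, P x ∂μ) ≤ min (σ ^ 2 / A' ^ 2) 1 * P A' := by
  have hA'2 : (0:ℝ) < A' ^ 2 := by positivity
  set c := P A' with hc
  -- pointwise bound
  have key : ∀ x ∈ Set.Icc (-A) A, P x ≤ min (x ^ 2 / A' ^ 2) 1 * c := by
    intro x hx
    have hxabs : P x = P |x| := by
      rcases abs_cases x with ⟨h, _⟩ | ⟨h, _⟩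
      · rw [h]
      · rw [h, hPeven]
    have habs : |x| ≤ A := abs_le.mpr ⟨hx.1, hx.2⟩
    have hx2 : x ^ 2 = |x| ^ 2 := (sq_abs x).symm
    rw [hxabs, hx2]
    set t := |x| with ht
    have ht0 : 0 ≤ t := abs_nonneg x
    rcases eq_or_lt_of_le ht0 with h0 | h0
    · rw [← h0, hP0]
      simp
    rcases le_or_gt t A' with hta | hta
    · have hr := hratio t A' h0 hta le_rfl
      have ht2 : (0:ℝ) < t ^ 2 := by positivity
      have hPt : P t ≤ t ^ 2 / A' ^ 2 * c := by
        rw [div_le_div_iff₀ ht2 hA'2] at hr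
        rw [div_mul_eq_mul_div, le_div_iff₀ hA'2]
        nlinarith [hr]
      have hmin : min (t ^ 2 / A' ^ 2) 1 = t ^ 2 / A' ^ 2 := by
        apply min_eq_left
        rw [div_le_one hA'2]
        exact pow_le_pow_left₀ ht0 hta 2
      rw [hmin]; exact hPt
    · have hmin : min (t ^ 2 / A' ^ 2) 1 = 1 := by
        apply min_eq_right
        rw [le_div_iff₀ hA'2]
        have := pow_le_pow_left₀ hA'.le hta.le 2
        linarith
      rw [hmin, one_mul]
      exact le_of_eq (hsat t ⟨hta.le, habs⟩)
  -- a.e. membership in the support interval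
  have hae : ∀ᵐ x ∂μ, x ∈ Set.Icc (-A) A := by
    have hcompl : μ (Set.Icc (-A) A)ᶜ = 0 := by
      rw [measure_compl measurableSet_Icc (measure_ne_top μ _), hsupp,
        measure_univ, tsub_self]
    rw [ae_iff]
    convert hcompl using 2
    rfl
  -- integrability facts
  have hm_meas : Measurable fun x : ℝ => min (x ^ 2 / A' ^ 2) 1 :=
    (measurable_id.pow_const 2 |>.div_const _).min measurable_const
  have hm_int : Integrable (fun x : ℝ => min (x ^ 2 / A' ^ 2) 1) μ := by
    refine (integrable_const (1:ℝ)).mono' hm_meas.aestronglyMeasurable ?_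
    filter_upwards with x
    rw [Real.norm_eq_abs, abs_le]
    constructor
    · have : (0:ℝ) ≤ min (x ^ 2 / A' ^ 2) 1 := le_min (by positivity) zero_le_one
      linarith
    · exact min_le_right _ _
  have hsq_int : Integrable (fun x : ℝ => x ^ 2) μ := by
    refine (integrable_const (A ^ 2)).mono'
      ((measurable_id.pow_const 2).aestronglyMeasurable) ?_
    filter_upwards [hae] with x hx
    rw [Real.norm_eq_abs, abs_of_nonneg (by positivity)]
    calc x ^ 2 = |x| ^ 2 := (sq_abs x).symm
      _ ≤ A ^ 2 := pow_le_pow_left₀ (abs_nonneg x) (abs_le.mpr ⟨hx.1, hx.2⟩) 2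
  have hg_int : Integrable (fun x : ℝ => min (x ^ 2 / A' ^ 2) 1 * c) μ :=
    hm_int.mul_const c
  by_cases hPint : Integrable P μ
  · have hminle : (∫ x, min (x ^ 2 / A' ^ 2) 1 ∂μ) ≤ min (σ ^ 2 / A' ^ 2) 1 := by
      refine le_min ?_ ?_
      · calc (∫ x, min (x ^ 2 / A' ^ 2) 1 ∂μ) ≤ ∫ x, x ^ 2 / A' ^ 2 ∂μ :=
              integral_mono hm_int (hsq_int.div_const _) fun x => min_le_left _ _
          _ = (∫ x, x ^ 2 ∂μ) / A' ^ 2 := integral_div _ _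
          _ ≤ σ ^ 2 / A' ^ 2 := by gcongr
      · calc (∫ x, min (x ^ 2 / A' ^ 2) 1 ∂μ) ≤ ∫ _x, (1:ℝ) ∂μ :=
              integral_mono hm_int (integrable_const 1) fun x => min_le_right _ _
          _ = 1 := by simp
    calc (∫ x, P x ∂μ) ≤ ∫ x, min (x ^ 2 / A' ^ 2) 1 * c ∂μ :=
          integral_mono_ae hPint hg_int (hae.mono fun x hx => key x hx)
      _ = (∫ x, min (x ^ 2 / A' ^ 2) 1 ∂μ) * c := integral_mul_const _ _
      _ ≤ min (σ ^ 2 / A' ^ 2) 1 * c := mul_le_mul_of_nonneg_right hminle hPA'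
  · rw [integral_undef hPint]
    exact mul_nonneg (le_min (by positivity) zero_le_one) hPA'
end

section
/- Define I₀(β) = (1/(2π)) ∫₀^{2π} exp(β cos θ) dθ for β ∈ ℝ. Let I_s > 0, I_Bv ≥ 0, B_v ∈ ℝ, η > 0, V_T > 0, R_s ≥ 0, R_L > 0, and β ∈ ℝ, and set c = (1 + R_s/R_L)/(η V_T). Then there exists a unique V ∈ ℝ satisfying I_s · (e^{-cV} · I₀(β) - 1) - I_Bv · e^{-B_v/(η V_T)} · (e^{cV} · I₀(β) - 1) = V / R_L. -/
open MeasureTheory Real Filter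

/-- The modified Bessel function of the first kind and order zero,
`I₀(β) = (1/(2π)) ∫₀^{2π} exp(β cos θ) dθ`. -/
noncomputable def besselI0 (β : ℝ) : ℝ :=
  (1 / (2 * π)) * ∫ θ in (0 : ℝ)..(2 * π), Real.exp (β * Real.cos θ)

lemma besselI0_pos (β : ℝ) : 0 < besselI0 β := by
  have hπ : 0 < π := Real.pi_pos
  have h : 0 < ∫ θ in (0 : ℝ)..(2 * π), Real.exp (β * Real.cos θ) := by
    apply intervalIntegral.intervalIntegral_pos_of_pos_on
    · exact Continuous.intervalIntegrable (by continuity) _ _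
    · intro x _; exact Real.exp_pos _
    · linarith
  have h2 : 0 < 1 / (2 * π) := by positivity
  exact mul_pos h2 h

/-- Existence and uniqueness of the output DC voltage of the single-diode
rectifier in the semi-closed-form saturation equation (equation (5)). -/
theorem rectifier_saturation_unique_solution
    (Is IBv Bv η VT Rs RL β : ℝ)
    (hIs : 0 < Is) (hIBv : 0 ≤ IBv) (hη : 0 < η) (hVT : 0 < VT)
    (hRs : 0 ≤ Rs) (hRL : 0 < RL) :
    ∃! V : ℝ,
      Is * (Real.exp (-((1 + Rs / RL) / (η * VT) * V)) * besselI0 β - 1) -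
        IBv * Real.exp (-(Bv / (η * VT))) *
          (Real.exp ((1 + Rs / RL) / (η * VT) * V) * besselI0 β - 1) = V / RL := by
  set c : ℝ := (1 + Rs / RL) / (η * VT) with hc_def
  have hc : 0 < c := by positivity
  set K : ℝ := IBv * Real.exp (-(Bv / (η * VT))) with hK_def
  have hK : 0 ≤ K := mul_nonneg hIBv (Real.exp_pos _).le
  set I0 : ℝ := besselI0 β with hI0_def
  have hI0 : 0 < I0 := besselI0_pos β
  set A : ℝ → ℝ := fun V => Is * (Real.exp (-(c * V)) * I0 - 1) - V / RL with hA_def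
  set g : ℝ → ℝ := fun V => A V - K * (Real.exp (c * V) * I0 - 1) with hg_def
  -- strict antitonicity
  have hganti : StrictAnti g := by
    intro a b hab
    have h1 : Real.exp (-(c * b)) ≤ Real.exp (-(c * a)) :=
      Real.exp_le_exp.mpr (by nlinarith)
    have h2 : Real.exp (c * a) ≤ Real.exp (c * b) :=
      Real.exp_le_exp.mpr (by nlinarith)
    have h3 : a / RL < b / RL := by gcongr
    have hIsI0 : 0 < Is * I0 := mul_pos hIs hI0
    have hKI0 : 0 ≤ K * I0 := mul_nonneg hK hI0.le
    simp only [hg_def, hA_def]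
    nlinarith
  have hgcont : Continuous g := by
    simp only [hg_def, hA_def]
    fun_prop
  -- limits of the linear maps
  have hcv_bot : Tendsto (fun V : ℝ => c * V) atBot atBot :=
    (tendsto_const_mul_atBot_of_pos hc).mpr tendsto_id
  have hcv_top : Tendsto (fun V : ℝ => c * V) atTop atTop :=
    (tendsto_const_mul_atTop_of_pos hc).mpr tendsto_id
  have hneg_bot : Tendsto (fun V : ℝ => -(c * V)) atBot atTop :=
    tendsto_neg_atBot_atTop.comp hcv_bot
  have hneg_top : Tendsto (fun V : ℝ => -(c * V)) atTop atBot :=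
    tendsto_neg_atTop_atBot.comp hcv_top
  -- A tends to atTop at atBot
  have hA_bot : Tendsto A atBot atTop := by
    have e1 : Tendsto (fun V : ℝ => Real.exp (-(c * V))) atBot atTop :=
      Real.tendsto_exp_atTop.comp hneg_bot
    have e2 : Tendsto (fun V : ℝ => Is * (Real.exp (-(c * V)) * I0 - 1)) atBot atTop := by
      refine (tendsto_const_mul_atTop_of_pos hIs).mpr ?_
      exact (e1.atTop_mul_const hI0).atTop_add tendsto_const_nhds
    have e3 : Tendsto (fun V : ℝ => -(V / RL)) atBot atTop :=
      tendsto_neg_atBot_atTop.comp (tendsto_id.atBot_div_const hRL)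
    simpa [hA_def, sub_eq_add_neg] using Tendsto.atTop_add_atTop e2 e3
  -- A tends to atBot at atTop
  have hA_top : Tendsto A atTop atBot := by
    have e1 : Tendsto (fun V : ℝ => Real.exp (-(c * V))) atTop (nhds 0) :=
      Real.tendsto_exp_atBot.comp hneg_top
    have e2 : Tendsto (fun V : ℝ => Is * (Real.exp (-(c * V)) * I0 - 1)) atTop
        (nhds (Is * (0 * I0 - 1))) := by
      exact Tendsto.const_mul _ (((e1.mul_const I0).sub_const 1))
    have e3 : Tendsto (fun V : ℝ => -(V / RL)) atTop atBot :=
      tendsto_neg_atTop_atBot.comp (tendsto_id.atTop_div_const hRL)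
    simpa [hA_def, sub_eq_add_neg] using e2.add_atBot e3
  -- g tends to atTop at atBot
  have hg_bot : Tendsto g atBot atTop := by
    have e1 : Tendsto (fun V : ℝ => Real.exp (c * V)) atBot (nhds 0) :=
      Real.tendsto_exp_atBot.comp hcv_bot
    have e2 : Tendsto (fun V : ℝ => -(K * (Real.exp (c * V) * I0 - 1))) atBot
        (nhds (-(K * (0 * I0 - 1)))) :=
      (Tendsto.const_mul _ ((e1.mul_const I0).sub_const 1)).neg
    simpa [hg_def, sub_eq_add_neg] using hA_bot.atTop_add e2
  -- g tends to atBot at atTop (bounded above by A + K)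
  have hg_top : Tendsto g atTop atBot := by
    have hub : ∀ V : ℝ, g V ≤ A V + K := by
      intro V
      have : 0 ≤ K * (Real.exp (c * V) * I0) :=
        mul_nonneg hK (mul_nonneg (Real.exp_pos _).le hI0.le)
      simp only [hg_def]
      nlinarith
    exact tendsto_atBot_mono hub (hA_top.atBot_add tendsto_const_nhds)
  -- surjectivity
  obtain ⟨V, hV⟩ := (hgcont.surjective' hg_bot hg_top) 0
  refine ⟨V, ?_, ?_⟩
  · have : A V - K * (Real.exp (c * V) * I0 - 1) = 0 := hV
    simp only [hA_def] at this
    linarith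
  · intro y hy
    have hgy : g y = 0 := by
      simp only [hg_def, hA_def]
      linarith
    exact hganti.injective (hgy.trans hV.symm)
end

section
/- Define I₀(β) = (1/(2π)) ∫₀^{2π} exp(β cos θ) dθ for β ∈ ℝ. Let I_s > 0, R_L > 0, R_s ≥ 0, η > 0, V_T > 0, and β ∈ ℝ. Then there exists a unique V ≥ 0 satisfying I₀(β) = (1 + V/(I_s R_L)) · exp( V·(1 + R_s/R_L)/(η V_T) ). Moreover V = 0 if and only if β = 0. -/
open MeasureTheory Real

lemma besselI0_zero : besselI0 0 = 1 := by
  have hπ : (0:ℝ) < π := Real.pi_pos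
  simp [besselI0]
  field_simp

lemma besselI0_gt_one {β : ℝ} (hβ : β ≠ 0) : 1 < besselI0 β := by
  have hπ : (0:ℝ) < π := Real.pi_pos
  set g : ℝ → ℝ := fun θ => Real.exp (β * Real.cos θ) - (1 + β * Real.cos θ) with hg
  have hgc : Continuous g := by fun_prop
  have hgnn : ∀ θ, 0 ≤ g θ := by
    intro θ
    have := Real.add_one_le_exp (β * Real.cos θ)
    simp only [hg]; linarith
  have h1 : 0 < ∫ θ in (0:ℝ)..(π/2), g θ := by
    apply intervalIntegral.intervalIntegral_pos_of_pos_on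
      (hgc.intervalIntegrable _ _)
    · intro x hx
      have hcos : 0 < Real.cos x := by
        apply Real.cos_pos_of_mem_Ioo
        constructor <;> [linarith [hx.1, Real.pi_pos]; exact hx.2]
      have hne : β * Real.cos x ≠ 0 := mul_ne_zero hβ (ne_of_gt hcos)
      have := Real.add_one_lt_exp hne
      simp only [hg]; linarith
    · linarith
  have h2 : 0 ≤ ∫ θ in (π/2:ℝ)..(2*π), g θ := by
    apply intervalIntegral.integral_nonneg (by linarith)
    intro x _; exact hgnn x
  have hsplit : (∫ θ in (0:ℝ)..(π/2), g θ) + (∫ θ in (π/2:ℝ)..(2*π), g θ)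
      = ∫ θ in (0:ℝ)..(2*π), g θ :=
    intervalIntegral.integral_add_adjacent_intervals
      (hgc.intervalIntegrable _ _) (hgc.intervalIntegrable _ _)
  have hgpos : 0 < ∫ θ in (0:ℝ)..(2*π), g θ := by linarith
  -- compute ∫ (1 + β cos θ) = 2π
  have hlin : (∫ θ in (0:ℝ)..(2*π), (1 + β * Real.cos θ)) = 2 * π := by
    rw [intervalIntegral.integral_add
      ((continuous_const : Continuous fun _ : ℝ => (1:ℝ)).intervalIntegrable _ _)
      ((by fun_prop : Continuous fun θ : ℝ => β * Real.cos θ).intervalIntegrable _ _)]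
    simp [intervalIntegral.integral_const_mul, integral_cos]
  have hdecomp : (∫ θ in (0:ℝ)..(2*π), Real.exp (β * Real.cos θ))
      = (∫ θ in (0:ℝ)..(2*π), g θ) + 2 * π := by
    calc (∫ θ in (0:ℝ)..(2*π), Real.exp (β * Real.cos θ))
        = ∫ θ in (0:ℝ)..(2*π), (g θ + (1 + β * Real.cos θ)) := by simp [hg]
      _ = (∫ θ in (0:ℝ)..(2*π), g θ) + ∫ θ in (0:ℝ)..(2*π), (1 + β * Real.cos θ) :=
          intervalIntegral.integral_add (hgc.intervalIntegrable _ _)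
            ((by fun_prop : Continuous (fun θ : ℝ => 1 + β * Real.cos θ)).intervalIntegrable _ _)
      _ = (∫ θ in (0:ℝ)..(2*π), g θ) + 2 * π := by rw [hlin]
  have : 2 * π < ∫ θ in (0:ℝ)..(2*π), Real.exp (β * Real.cos θ) := by
    rw [hdecomp]; linarith
  rw [besselI0]
  rw [div_mul_eq_mul_div, one_mul, lt_div_iff₀ (by linarith)]
  linarith

/-- Unique solvability of the low-input-power rectifier equation
(equation (7)); the unique nonnegative solution is zero iff `β = 0`. -/
theorem rectifier_low_power_unique_solution
    (Is RL Rs η VT β : ℝ)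
    (hIs : 0 < Is) (hRL : 0 < RL) (hRs : 0 ≤ Rs) (hη : 0 < η) (hVT : 0 < VT) :
    (∃! V : ℝ, 0 ≤ V ∧
        besselI0 β = (1 + V / (Is * RL)) * Real.exp (V * (1 + Rs / RL) / (η * VT))) ∧
    (∀ V : ℝ, 0 ≤ V →
        besselI0 β = (1 + V / (Is * RL)) * Real.exp (V * (1 + Rs / RL) / (η * VT)) →
        (V = 0 ↔ β = 0)) := by
  set k := Is * RL with hk
  have hkpos : 0 < k := mul_pos hIs hRL
  set c := (1 + Rs / RL) / (η * VT) with hc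
  have hcpos : 0 < c := by
    apply div_pos
    · have : 0 ≤ Rs / RL := div_nonneg hRs hRL.le
      linarith
    · exact mul_pos hη hVT
  set f : ℝ → ℝ := fun V => (1 + V / k) * Real.exp (V * c) with hf
  have hfeq : ∀ V, (1 + V / (Is * RL)) * Real.exp (V * (1 + Rs / RL) / (η * VT)) = f V := by
    intro V; simp [hf, hk, hc, mul_div_assoc]
  have hf0 : f 0 = 1 := by simp [hf]
  have hmono : StrictMonoOn f (Set.Ici 0) := by
    intro a ha b hb hab
    simp only [Set.mem_Ici] at ha hb
    have h1 : 1 + a / k < 1 + b / k := by gcongr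
    have h2 : Real.exp (a * c) < Real.exp (b * c) := by
      apply Real.exp_lt_exp.2; exact mul_lt_mul_of_pos_right hab hcpos
    have hA : 0 ≤ 1 + a / k := by positivity
    have hE : 0 ≤ Real.exp (a * c) := (Real.exp_pos _).le
    exact mul_lt_mul'' h1 h2 hA hE
  set B := besselI0 β with hB
  have hB1 : 1 ≤ B := by
    rcases eq_or_ne β 0 with h | h
    · rw [hB, h, besselI0_zero]
    · exact (besselI0_gt_one h).le
  -- existence
  set M := (B - 1) * k with hM
  have hM0 : 0 ≤ M := mul_nonneg (by linarith) hkpos.le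
  have hfM : B ≤ f M := by
    have h1 : 1 + M / k = B := by field_simp [hM]; linear_combination hM
    have h2 : (1:ℝ) ≤ Real.exp (M * c) := Real.one_le_exp (by positivity)
    calc B = (1 + M / k) * 1 := by rw [h1, mul_one]
    _ ≤ (1 + M / k) * Real.exp (M * c) := by
        apply mul_le_mul_of_nonneg_left h2; rw [h1]; linarith
    _ = f M := rfl
  have hcont : ContinuousOn f (Set.Icc 0 M) := by
    apply Continuous.continuousOn; fun_prop
  obtain ⟨V, hVmem, hfV⟩ : ∃ V ∈ Set.Icc (0:ℝ) M, f V = B := by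
    have := intermediate_value_Icc hM0 hcont
    have hBmem : B ∈ Set.Icc (f 0) (f M) := by
      rw [hf0]; exact ⟨hB1, hfM⟩
    exact this hBmem
  have hexu : ∃! V : ℝ, 0 ≤ V ∧
      B = (1 + V / (Is * RL)) * Real.exp (V * (1 + Rs / RL) / (η * VT)) := by
    refine ⟨V, ⟨hVmem.1, by rw [hfeq, hfV]⟩, ?_⟩
    rintro W ⟨hW0, hWeq⟩
    rw [hfeq] at hWeq
    exact hmono.injOn hW0 hVmem.1 (by rw [← hWeq, hfV])
  refine ⟨hexu, ?_⟩
  intro W hW0 hWeq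
  rw [hfeq] at hWeq
  constructor
  · intro hW
    by_contra hβ
    have := besselI0_gt_one hβ
    rw [← hB] at this
    rw [hW, hf0] at hWeq
    linarith
  · intro hβ
    have hB0 : B = 1 := by rw [hB, hβ, besselI0_zero]
    by_contra hW
    have hWpos : 0 < W := lt_of_le_of_ne hW0 (Ne.symm hW)
    have := hmono (Set.mem_Ici.2 le_rfl) (Set.mem_Ici.2 hW0) hWpos
    rw [hf0, ← hWeq, hB0] at this
    exact lt_irrefl _ this
end

section
/- Let σ > 0 and h ∈ ℂ with h ≠ 0. Let r be a nonnegative real random variable, Θ uniformly distributed on [0, 2π), and N a complex random variable whose real and imaginary parts are independent real Gaussians with mean 0 and variance σ², where r, Θ, N are mutually independent. Set Y = h · r · e^{iΘ} + N. Then the argument of Y is uniformly distributed on its range and is independent of |Y|; equivalently, the joint law of (|Y|, arg Y) is the product of the law of |Y| and the uniform distribution on (-π, π]. -/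
open MeasureTheory Real ProbabilityTheory
open scoped ENNReal NNReal

namespace OutputPhaseAux

open Set

local instance : Fact (0 < 2 * π) := ⟨Real.two_pi_pos⟩

lemma toIocMod_eq_addCircle (x : ℝ) :
    toIocMod Real.two_pi_pos (-π) x
      = ((AddCircle.measurableEquivIoc (2 * π) (-π) ((x : AddCircle (2 * π)))) : ℝ) := by
  have h : AddCircle.measurableEquivIoc (2*π) (-π) ((x : AddCircle (2*π)))
      = ⟨toIocMod Real.two_pi_pos (-π) x, toIocMod_mem_Ioc _ _ _⟩ :=
    QuotientAddGroup.equivIocMod_coe _ _ _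
  rw [h]

lemma measurable_val_equivIoc :
    Measurable fun q : AddCircle (2*π) =>
      ((AddCircle.measurableEquivIoc (2*π) (-π) q) : ℝ) :=
  measurable_subtype_coe.comp (AddCircle.measurableEquivIoc _ _).measurable

lemma measurable_wrap : Measurable fun x : ℝ => toIocMod Real.two_pi_pos (-π) x := by
  have h : (fun x : ℝ => toIocMod Real.two_pi_pos (-π) x)
      = fun x : ℝ => ((AddCircle.measurableEquivIoc (2*π) (-π) ((x : AddCircle (2*π)))) : ℝ) := by
    funext x; exact toIocMod_eq_addCircle x
  rw [h]
  exact measurable_val_equivIoc.comp AddCircle.measurable_mk'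

lemma map_equivIoc_volume :
    Measure.map (fun q : AddCircle (2*π) => ((AddCircle.measurableEquivIoc (2*π) (-π) q) : ℝ))
      volume = volume.restrict (Ioc (-π) π) := by
  have hmk := AddCircle.measurePreserving_mk (2*π) (-π)
  rw [← hmk.map_eq, Measure.map_map measurable_val_equivIoc AddCircle.measurable_mk']
  have h1 : ((fun q : AddCircle (2*π) => ((AddCircle.measurableEquivIoc (2*π) (-π) q) : ℝ))
      ∘ ((↑) : ℝ → AddCircle (2*π))) = fun x : ℝ => toIocMod Real.two_pi_pos (-π) x :=
    funext fun x => (toIocMod_eq_addCircle x).symm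
  rw [h1]
  have h2 : (fun x : ℝ => toIocMod Real.two_pi_pos (-π) x)
      =ᵐ[volume.restrict (Ioc (-π) (-π + 2*π))] id := by
    refine (ae_restrict_iff' measurableSet_Ioc).2 (Filter.Eventually.of_forall fun x hx => ?_)
    exact (toIocMod_eq_self Real.two_pi_pos).2 hx
  rw [Measure.map_congr h2, Measure.map_id]
  have : -π + 2*π = π := by ring
  rw [this]

lemma map_wrap_add (c : ℝ) :
    Measure.map (fun θ : ℝ => toIocMod Real.two_pi_pos (-π) (θ + c))
        (volume.restrict (Ico 0 (2*π))) = volume.restrict (Ioc (-π) π) := by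
  have hres : volume.restrict (Ico 0 (2*π)) = volume.restrict (Ioc 0 (0 + 2*π)) := by
    rw [zero_add]; exact Measure.restrict_congr_set Ico_ae_eq_Ioc
  have haddm : Measurable fun q : AddCircle (2*π) => (c : AddCircle (2*π)) + q :=
    measurable_const_add _
  have hfun : (fun θ : ℝ => toIocMod Real.two_pi_pos (-π) (θ + c))
      = ((fun q : AddCircle (2*π) => ((AddCircle.measurableEquivIoc (2*π) (-π) q) : ℝ))
          ∘ (fun q : AddCircle (2*π) => (c : AddCircle (2*π)) + q))
        ∘ ((↑) : ℝ → AddCircle (2*π)) := by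
    funext θ
    simp only [Function.comp_apply]
    rw [toIocMod_eq_addCircle (θ + c)]
    exact congrArg (fun q : AddCircle (2*π) =>
      ((AddCircle.measurableEquivIoc (2*π) (-π) q : ℝ))) (by rw [AddCircle.coe_add, add_comm])
  rw [hres, hfun, ← Measure.map_map (measurable_val_equivIoc.comp haddm) AddCircle.measurable_mk',
    (AddCircle.measurePreserving_mk (2*π) 0).map_eq,
    ← Measure.map_map measurable_val_equivIoc haddm,
    (measurePreserving_add_left volume ((c : AddCircle (2*π)))).map_eq,
    map_equivIoc_volume]

lemma arg_exp_rot (θ : ℝ) {w : ℂ} (hw : w ≠ 0) :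
    Complex.arg (Complex.exp (Complex.I * θ) * w)
      = toIocMod Real.two_pi_pos (-π) (θ + Complex.arg w) := by
  have hne : Complex.exp (Complex.I * θ) ≠ 0 := Complex.exp_ne_zero _
  have harg : ((Complex.exp (Complex.I * θ)).arg : Real.Angle) = (θ : Real.Angle) := by
    rw [show Complex.I * (θ : ℂ) = (θ : ℂ) * Complex.I from mul_comm _ _,
      Complex.arg_exp_mul_I]
    have := Real.Angle.coe_toReal ((θ : ℝ) : Real.Angle)
    rw [Real.Angle.toReal_coe] at this
    exact this
  have h1 : (((Complex.exp (Complex.I * θ) * w).arg : ℝ) : Real.Angle)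
      = ((θ + w.arg : ℝ) : Real.Angle) := by
    rw [Complex.arg_mul_coe_angle hne hw, harg, Real.Angle.coe_add]
  have h2 : Complex.arg (Complex.exp (Complex.I * θ) * w)
      = (((θ + w.arg : ℝ) : Real.Angle)).toReal := by
    rw [← h1]
    exact (Real.Angle.toReal_coe_eq_self_iff_mem_Ioc.2
      ⟨Complex.neg_pi_lt_arg _, Complex.arg_le_pi _⟩).symm
  rw [h2, Real.Angle.toReal_coe]

lemma abs_exp_rot (θ : ℝ) (w : ℂ) :
    ‖Complex.exp (Complex.I * θ) * w‖ = ‖w‖ := by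
  rw [norm_mul, Complex.norm_exp]
  simp

lemma map_withDensity_equiv {α β : Type*} [MeasurableSpace α] [MeasurableSpace β]
    (e : α ≃ᵐ β) (μ : Measure α) {f : β → ℝ≥0∞} (hf : Measurable f) :
    Measure.map e (μ.withDensity (f ∘ e)) = (Measure.map e μ).withDensity f := by
  ext s hs
  rw [Measure.map_apply e.measurable hs, withDensity_apply _ hs,
    withDensity_apply _ (e.measurable hs), setLIntegral_map hs hf e.measurable]
  rfl

lemma withDensity_prod_aux {α β : Type*} [MeasurableSpace α] [MeasurableSpace β]
    (μ : Measure α) (ν : Measure β) [SigmaFinite μ] [SigmaFinite ν]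
    {f : α → ℝ≥0∞} {g : β → ℝ≥0∞} (hf : Measurable f) (hg : Measurable g)
    [SigmaFinite (μ.withDensity f)] [SigmaFinite (ν.withDensity g)] :
    (μ.withDensity f).prod (ν.withDensity g)
      = (μ.prod ν).withDensity (fun p => f p.1 * g p.2) := by
  refine Measure.prod_eq fun s t hs ht => ?_
  rw [withDensity_apply _ (hs.prod ht), withDensity_apply _ hs, withDensity_apply _ ht,
    ← Measure.prod_restrict]
  exact lintegral_prod_mul hf.aemeasurable hg.aemeasurable

noncomputable def gPDF (v : ℝ≥0) : ℂ → ℝ≥0∞ :=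
  fun z => gaussianPDF 0 v z.re * gaussianPDF 0 v z.im

lemma measurable_gPDF (v : ℝ≥0) : Measurable (gPDF v) :=
  ((measurable_gaussianPDF 0 v).comp Complex.measurable_re).mul
    ((measurable_gaussianPDF 0 v).comp Complex.measurable_im)

lemma gPDF_eq (v : ℝ≥0) (z : ℂ) :
    gPDF v z = ENNReal.ofReal
      ((Real.sqrt (2 * π * v))⁻¹ ^ 2 * Real.exp (-Complex.normSq z / (2 * v))) := by
  simp only [gPDF, gaussianPDF, gaussianPDFReal]
  rw [← ENNReal.ofReal_mul (by positivity)]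
  congr 1
  rw [Complex.normSq_apply,
    show -(z.re * z.re + z.im * z.im) / (2 * (v:ℝ))
        = -(z.re - 0)^2 / (2 * (v:ℝ)) + -(z.im - 0)^2 / (2 * (v:ℝ)) by ring,
    Real.exp_add]
  ring

lemma gaussian_complex_withDensity {v : ℝ≥0} (hv : v ≠ 0) :
    Measure.map Complex.measurableEquivRealProd.symm
        ((gaussianReal 0 v).prod (gaussianReal 0 v))
      = volume.withDensity (gPDF v) := by
  haveI : IsProbabilityMeasure (volume.withDensity (gaussianPDF 0 v)) := by
    rw [← gaussianReal_of_var_ne_zero 0 hv]; infer_instance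
  rw [gaussianReal_of_var_ne_zero 0 hv,
    withDensity_prod_aux volume volume (measurable_gaussianPDF 0 v) (measurable_gaussianPDF 0 v)]
  have hfun : (fun p : ℝ × ℝ => gaussianPDF 0 v p.1 * gaussianPDF 0 v p.2)
      = gPDF v ∘ Complex.measurableEquivRealProd.symm := rfl
  rw [hfun, map_withDensity_equiv _ _ (measurable_gPDF v)]
  congr 1
  rw [← Measure.volume_eq_prod]
  exact (Complex.volume_preserving_equiv_real_prod.symm Complex.measurableEquivRealProd).map_eq

lemma rot_invariant (v : ℝ≥0) (θ : ℝ) :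
    Measure.map (fun z : ℂ => Complex.exp (Complex.I * θ) * z)
        (volume.withDensity (gPDF v)) = volume.withDensity (gPDF v) := by
  set u : Circle := Circle.exp θ with hu
  have hfun : (fun z : ℂ => Complex.exp (Complex.I * θ) * z)
      = ⇑(rotation u).toHomeomorph.toMeasurableEquiv := by
    funext z
    simp only [Homeomorph.toMeasurableEquiv_coe, LinearIsometryEquiv.coe_toHomeomorph, rotation_apply, hu, Circle.coe_exp]
    rw [mul_comm (θ:ℂ) Complex.I]
  have hcomp : gPDF v ∘ ⇑(rotation u).toHomeomorph.toMeasurableEquiv = gPDF v := by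
    funext z
    simp only [Function.comp_apply, Homeomorph.toMeasurableEquiv_coe, LinearIsometryEquiv.coe_toHomeomorph, rotation_apply]
    rw [gPDF_eq, gPDF_eq, Complex.normSq_mul,
      show Complex.normSq (u : ℂ) = 1 by
        rw [Complex.normSq_eq_norm_sq, Circle.norm_coe, one_pow],
      one_mul]
  rw [hfun]
  calc Measure.map (⇑(rotation u).toHomeomorph.toMeasurableEquiv) (volume.withDensity (gPDF v))
      = Measure.map (⇑(rotation u).toHomeomorph.toMeasurableEquiv)
          (volume.withDensity (gPDF v ∘ ⇑(rotation u).toHomeomorph.toMeasurableEquiv)) := by rw [hcomp]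
    _ = (Measure.map (⇑(rotation u).toHomeomorph.toMeasurableEquiv) volume).withDensity (gPDF v) :=
        map_withDensity_equiv _ _ (measurable_gPDF v)
    _ = volume.withDensity (gPDF v) := by
        rw [show Measure.map (⇑(rotation u).toHomeomorph.toMeasurableEquiv) volume = volume from
          (rotation u).measurePreserving.map_eq]

/-- The joint map `(|Y|, arg Y)` as a function of `(r, Θ, N)`. -/
noncomputable def Gf (h : ℂ) : ℝ × ℝ × ℂ → ℝ × ℝ := fun x =>
  (‖h * x.1 * Complex.exp (Complex.I * x.2.1) + x.2.2‖,
   Complex.arg (h * x.1 * Complex.exp (Complex.I * x.2.1) + x.2.2))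

lemma measurable_Gf_inner (h : ℂ) :
    Measurable fun x : ℝ × ℝ × ℂ => h * x.1 * Complex.exp (Complex.I * x.2.1) + x.2.2 :=
  ((measurable_const.mul (Complex.measurable_ofReal.comp measurable_fst)).mul
    (Complex.measurable_exp.comp
      ((Complex.measurable_ofReal.comp (measurable_fst.comp measurable_snd)).const_mul
        Complex.I))).add (measurable_snd.comp measurable_snd)

lemma measurable_Gf (h : ℂ) : Measurable (Gf h) :=
  (continuous_norm.measurable.comp (measurable_Gf_inner h)).prodMk
    (Complex.measurable_arg.comp (measurable_Gf_inner h))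

noncomputable def Hf (h : ℂ) : ℝ × (ℝ × ℂ) → ℝ × ℝ := fun q =>
  (‖h * q.2.1 + q.2.2‖,
   toIocMod Real.two_pi_pos (-π) (q.1 + Complex.arg (h * q.2.1 + q.2.2)))

lemma measurable_W (h : ℂ) : Measurable fun p : ℝ × ℂ => h * p.1 + p.2 :=
  (measurable_const.mul (Complex.measurable_ofReal.comp measurable_fst)).add measurable_snd

end OutputPhaseAux

open OutputPhaseAux Set

/-- Lemma 2 / Appendix G (equation (G.5)): for the complex AWGN channel
`Y = h·r·e^{iΘ} + N` with `r, Θ, N` mutually independent, `Θ` uniform on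
`[0, 2π)`, and `N` circularly symmetric complex Gaussian with per-component
variance `σ²`, the phase of `Y` is uniformly distributed and independent of
the magnitude of `Y`: the joint law of `(|Y|, arg Y)` is the product of the
law of `|Y|` and the uniform distribution on `(-π, π]`. -/
theorem output_phase_uniform_and_indep
    (σ : ℝ) (hσ : 0 < σ) (h : ℂ) (hh : h ≠ 0)
    {Ω : Type*} [MeasurableSpace Ω] (P : Measure Ω) [IsProbabilityMeasure P]
    (r : Ω → ℝ) (hr : Measurable r) (hrnonneg : ∀ ω, 0 ≤ r ω)
    (Θ : Ω → ℝ) (hΘ : Measurable Θ)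
    (hΘunif : Measure.map Θ P =
      (ENNReal.ofReal (2 * π))⁻¹ • volume.restrict (Set.Ico 0 (2 * π)))
    (N : Ω → ℂ) (hN : Measurable N)
    (hNlaw : Measure.map (fun ω => ((N ω).re, (N ω).im)) P =
      (gaussianReal 0 (σ ^ 2).toNNReal).prod (gaussianReal 0 (σ ^ 2).toNNReal))
    (hindep : Measure.map (fun ω => (r ω, Θ ω, N ω)) P =
      (Measure.map r P).prod ((Measure.map Θ P).prod (Measure.map N P)))
    (Y : Ω → ℂ)
    (hY : ∀ ω, Y ω = h * (r ω : ℂ) * Complex.exp (Complex.I * (Θ ω : ℂ)) + N ω) :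
    Measure.map (fun ω => (‖Y ω‖, Complex.arg (Y ω))) P =
      (Measure.map (fun ω => ‖Y ω‖) P).prod
        ((ENNReal.ofReal (2 * π))⁻¹ • volume.restrict (Set.Ioc (-π) π)) := by
  set v : ℝ≥0 := (σ ^ 2).toNNReal with hvdef
  have hv : v ≠ 0 := by
    simp only [hvdef, ne_eq, Real.toNNReal_eq_zero, not_le]
    positivity
  set U : Measure ℝ := (ENNReal.ofReal (2 * π))⁻¹ • volume.restrict (Set.Ico 0 (2 * π)) with hU
  set Unif : Measure ℝ := (ENNReal.ofReal (2 * π))⁻¹ • volume.restrict (Set.Ioc (-π) π)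
    with hUnif
  have h2π0 : (ENNReal.ofReal (2*π)) ≠ 0 := ne_of_gt (ENNReal.ofReal_pos.2 Real.two_pi_pos)
  haveI hUprob : IsProbabilityMeasure U := by
    constructor
    rw [hU, Measure.smul_apply, Measure.restrict_apply MeasurableSet.univ, Set.univ_inter,
      Real.volume_Ico, smul_eq_mul, sub_zero]
    exact ENNReal.inv_mul_cancel h2π0 ENNReal.ofReal_ne_top
  haveI hUnifprob : IsProbabilityMeasure Unif := by
    constructor
    rw [hUnif, Measure.smul_apply, Measure.restrict_apply MeasurableSet.univ, Set.univ_inter,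
      Real.volume_Ioc, smul_eq_mul, show π - -π = 2*π by ring]
    exact ENNReal.inv_mul_cancel h2π0 ENNReal.ofReal_ne_top
  set μr : Measure ℝ := Measure.map r P with hμrdef
  set μN : Measure ℂ := Measure.map N P with hμNdef
  haveI : IsProbabilityMeasure μr := Measure.isProbabilityMeasure_map hr.aemeasurable
  haveI : IsProbabilityMeasure μN := Measure.isProbabilityMeasure_map hN.aemeasurable
  -- identify the law of N
  have hμN : μN = volume.withDensity (gPDF v) := by
    have hmapN : Measure.map (⇑Complex.measurableEquivRealProd) μN
        = (gaussianReal 0 v).prod (gaussianReal 0 v) := by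
      rw [hμNdef, Measure.map_map Complex.measurableEquivRealProd.measurable hN]
      exact hNlaw
    calc μN = Measure.map (⇑Complex.measurableEquivRealProd.symm)
          (Measure.map (⇑Complex.measurableEquivRealProd) μN) :=
        (MeasurableEquiv.map_symm_map Complex.measurableEquivRealProd).symm
      _ = volume.withDensity (gPDF v) := by
        rw [hmapN]; exact gaussian_complex_withDensity hv
  have hrot : ∀ θ : ℝ, Measure.map (fun z : ℂ => Complex.exp (Complex.I * θ) * z) μN = μN := by
    intro θ; rw [hμN]; exact rot_invariant v θ
  -- express the joint map through (r, Θ, N)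
  have htriple : Measurable fun ω => (r ω, Θ ω, N ω) := hr.prodMk (hΘ.prodMk hN)
  have hpair : (fun ω => (‖Y ω‖, Complex.arg (Y ω)))
      = Gf h ∘ (fun ω => (r ω, Θ ω, N ω)) := by
    funext ω
    simp only [Function.comp_apply, Gf, hY ω]
  have hpairm : Measurable fun ω => (‖Y ω‖, Complex.arg (Y ω)) := by
    rw [hpair]; exact (measurable_Gf h).comp htriple
  have hjoint : Measure.map (fun ω => (‖Y ω‖, Complex.arg (Y ω))) P
      = Measure.map (Gf h) (μr.prod (U.prod μN)) := by
    rw [hpair, ← Measure.map_map (measurable_Gf h) htriple, hindep, hΘunif]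
  -- rearrange the product measure
  have m0 : MeasurePreserving (⇑(MeasurableEquiv.prodAssoc : (ℝ × ℝ) × ℂ ≃ᵐ ℝ × ℝ × ℂ))
      ((U.prod μr).prod μN) (U.prod (μr.prod μN)) :=
    ⟨MeasurableEquiv.prodAssoc.measurable, Measure.prodAssoc_prod⟩
  have m1 := m0.symm MeasurableEquiv.prodAssoc
  have m2 : MeasurePreserving (Prod.map Prod.swap (id : ℂ → ℂ))
      ((U.prod μr).prod μN) ((μr.prod U).prod μN) :=
    (Measure.measurePreserving_swap).prod (MeasurePreserving.id μN)
  have m3 : MeasurePreserving (⇑(MeasurableEquiv.prodAssoc : (ℝ × ℝ) × ℂ ≃ᵐ ℝ × ℝ × ℂ))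
      ((μr.prod U).prod μN) (μr.prod (U.prod μN)) :=
    ⟨MeasurableEquiv.prodAssoc.measurable, Measure.prodAssoc_prod⟩
  have hE : MeasurePreserving (fun q : ℝ × (ℝ × ℂ) => (q.2.1, (q.1, q.2.2)))
      (U.prod (μr.prod μN)) (μr.prod (U.prod μN)) := m3.comp (m2.comp m1)
  -- the rotation skew product
  have hT : MeasurePreserving
      (fun q : ℝ × (ℝ × ℂ) => (q.1, (q.2.1, Complex.exp (Complex.I * q.1) * q.2.2)))
      (U.prod (μr.prod μN)) (U.prod (μr.prod μN)) := by
    have hgm' : Measurable (Function.uncurry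
        (fun (θ : ℝ) (p : ℝ × ℂ) => ((p.1, Complex.exp (Complex.I * θ) * p.2) : ℝ × ℂ))) :=
      (measurable_fst.comp measurable_snd).prodMk
        ((Complex.measurable_exp.comp
          ((Complex.measurable_ofReal.comp measurable_fst).const_mul Complex.I)).mul
          (measurable_snd.comp measurable_snd))
    have hg' : ∀ᵐ (θ : ℝ) ∂U, Measure.map
        (fun p : ℝ × ℂ => ((p.1, Complex.exp (Complex.I * (θ : ℂ)) * p.2) : ℝ × ℂ))
        (μr.prod μN) = μr.prod μN := by
      refine Filter.Eventually.of_forall fun θ => ?_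
      exact ((MeasurePreserving.id μr).prod
        ⟨(continuous_const.mul continuous_id).measurable, hrot θ⟩).map_eq
    have hsk := MeasurePreserving.skew_product (f := @id ℝ)
      (g := fun (θ : ℝ) (p : ℝ × ℂ) => ((p.1, Complex.exp (Complex.I * θ) * p.2) : ℝ × ℂ))
      (MeasurePreserving.id U) hgm' hg'
    exact hsk
  have hstep : Measure.map (Gf h) (μr.prod (U.prod μN))
      = Measure.map ((Gf h ∘ (fun q : ℝ × (ℝ × ℂ) => (q.2.1, (q.1, q.2.2))))
          ∘ (fun q : ℝ × (ℝ × ℂ) => (q.1, (q.2.1, Complex.exp (Complex.I * q.1) * q.2.2))))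
          (U.prod (μr.prod μN)) := by
    calc Measure.map (Gf h) (μr.prod (U.prod μN))
        = Measure.map (Gf h)
            (Measure.map (fun q : ℝ × (ℝ × ℂ) => (q.2.1, (q.1, q.2.2)))
              (U.prod (μr.prod μN))) := by rw [hE.map_eq]
      _ = Measure.map (Gf h ∘ (fun q : ℝ × (ℝ × ℂ) => (q.2.1, (q.1, q.2.2))))
            (U.prod (μr.prod μN)) := Measure.map_map (measurable_Gf h) hE.measurable
      _ = Measure.map (Gf h ∘ (fun q : ℝ × (ℝ × ℂ) => (q.2.1, (q.1, q.2.2))))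
            (Measure.map
              (fun q : ℝ × (ℝ × ℂ) => (q.1, (q.2.1, Complex.exp (Complex.I * q.1) * q.2.2)))
              (U.prod (μr.prod μN))) := by rw [hT.map_eq]
      _ = _ := Measure.map_map ((measurable_Gf h).comp hE.measurable) hT.measurable
  -- almost everywhere, this composite equals `Hf h`
  have hWm2 : Measurable fun q : ℝ × (ℝ × ℂ) => h * q.2.1 + q.2.2 :=
    (measurable_W h).comp measurable_snd
  have hane : ∀ᵐ q ∂(U.prod (μr.prod μN)), h * (q.2.1 : ℂ) + q.2.2 ≠ 0 := by
    have hZm : MeasurableSet {q : ℝ × (ℝ × ℂ) | h * q.2.1 + q.2.2 = 0} :=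
      hWm2 (measurableSet_singleton 0)
    have hinner : ∀ a : ℝ, μN {n : ℂ | h * a + n = 0} = 0 := by
      intro a
      have hset : {n : ℂ | h * a + n = 0} = {-(h * a)} := by
        ext n
        simp only [Set.mem_setOf_eq, Set.mem_singleton_iff]
        constructor
        · intro hn; exact eq_neg_of_add_eq_zero_right hn
        · intro hn; rw [hn]; ring
      rw [hset, hμN]
      exact (withDensity_absolutelyContinuous volume (gPDF v)) (measure_singleton _)
    have hslice : (μr.prod μN) {p : ℝ × ℂ | h * p.1 + p.2 = 0} = 0 := by
      rw [Measure.measure_prod_null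
        (show MeasurableSet {p : ℝ × ℂ | h * p.1 + p.2 = 0} from
          (measurable_W h) (measurableSet_singleton 0))]
      refine Filter.Eventually.of_forall fun a => ?_
      show μN (Prod.mk a ⁻¹' {p : ℝ × ℂ | h * p.1 + p.2 = 0}) = 0
      exact hinner a
    have hnull : (U.prod (μr.prod μN)) {q : ℝ × (ℝ × ℂ) | h * q.2.1 + q.2.2 = 0} = 0 := by
      rw [Measure.measure_prod_null hZm]
      refine Filter.Eventually.of_forall fun θ => ?_
      show (μr.prod μN) (Prod.mk θ ⁻¹' {q : ℝ × (ℝ × ℂ) | h * q.2.1 + q.2.2 = 0}) = 0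
      exact hslice
    rw [ae_iff]
    simpa only [not_not] using hnull
  have hae : ((Gf h ∘ (fun q : ℝ × (ℝ × ℂ) => (q.2.1, (q.1, q.2.2))))
          ∘ (fun q : ℝ × (ℝ × ℂ) => (q.1, (q.2.1, Complex.exp (Complex.I * q.1) * q.2.2))))
      =ᵐ[U.prod (μr.prod μN)] Hf h := by
    filter_upwards [hane] with q hq
    obtain ⟨θ, a, n⟩ := q
    simp only [Function.comp_apply, Gf, Hf]
    have hw : h * a * Complex.exp (Complex.I * θ) + Complex.exp (Complex.I * θ) * n
        = Complex.exp (Complex.I * θ) * (h * a + n) := by ring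
    rw [hw, abs_exp_rot, arg_exp_rot θ hq]
  have hmapH : Measure.map (Gf h) (μr.prod (U.prod μN))
      = Measure.map (Hf h) (U.prod (μr.prod μN)) := by
    rw [hstep]; exact Measure.map_congr hae
  -- final skew product giving the product law
  set f0 : ℝ × ℂ → ℝ := fun p => ‖h * p.1 + p.2‖ with hf0
  have hf0m : Measurable f0 := continuous_norm.measurable.comp (measurable_W h)
  haveI : IsProbabilityMeasure (Measure.map f0 (μr.prod μN)) :=
    Measure.isProbabilityMeasure_map hf0m.aemeasurable
  have hskew2 : MeasurePreserving
      (fun q : (ℝ × ℂ) × ℝ => (f0 q.1,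
        toIocMod Real.two_pi_pos (-π) (q.2 + Complex.arg (h * q.1.1 + q.1.2))))
      ((μr.prod μN).prod U) ((Measure.map f0 (μr.prod μN)).prod Unif) := by
    have hgm2 : Measurable (Function.uncurry
        (fun (p : ℝ × ℂ) (θ : ℝ) =>
          toIocMod Real.two_pi_pos (-π) (θ + Complex.arg (h * p.1 + p.2)))) :=
      measurable_wrap.comp
        (measurable_snd.add
          (Complex.measurable_arg.comp ((measurable_W h).comp measurable_fst)))
    have hg2 : ∀ᵐ p ∂(μr.prod μN), Measure.map
        (fun θ : ℝ => toIocMod Real.two_pi_pos (-π) (θ + Complex.arg (h * p.1 + p.2))) U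
        = Unif := by
      refine Filter.Eventually.of_forall fun p => ?_
      rw [hU, hUnif, Measure.map_smul, map_wrap_add]
    have hsk2 := MeasurePreserving.skew_product (f := f0)
      (g := fun (p : ℝ × ℂ) (θ : ℝ) =>
        toIocMod Real.two_pi_pos (-π) (θ + Complex.arg (h * p.1 + p.2)))
      (hf0m.measurePreserving (μr.prod μN)) hgm2 hg2
    exact hsk2
  have hHcomp : Hf h = (fun q : (ℝ × ℂ) × ℝ => (f0 q.1,
      toIocMod Real.two_pi_pos (-π) (q.2 + Complex.arg (h * q.1.1 + q.1.2)))) ∘ Prod.swap := rfl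
  have hfinal : Measure.map (fun ω => (‖Y ω‖, Complex.arg (Y ω))) P
      = (Measure.map f0 (μr.prod μN)).prod Unif := by
    calc Measure.map (fun ω => (‖Y ω‖, Complex.arg (Y ω))) P
        = Measure.map (Hf h) (U.prod (μr.prod μN)) := by rw [hjoint, hmapH]
      _ = Measure.map ((fun q : (ℝ × ℂ) × ℝ => (f0 q.1,
            toIocMod Real.two_pi_pos (-π) (q.2 + Complex.arg (h * q.1.1 + q.1.2))))
            ∘ Prod.swap) (U.prod (μr.prod μN)) := by rw [hHcomp]
      _ = Measure.map (fun q : (ℝ × ℂ) × ℝ => (f0 q.1,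
            toIocMod Real.two_pi_pos (-π) (q.2 + Complex.arg (h * q.1.1 + q.1.2))))
            (Measure.map Prod.swap (U.prod (μr.prod μN))) :=
          (Measure.map_map hskew2.measurable measurable_swap).symm
      _ = (Measure.map f0 (μr.prod μN)).prod Unif := by
          rw [Measure.measurePreserving_swap.map_eq, hskew2.map_eq]
  have habs : Measure.map (fun ω => ‖Y ω‖) P = Measure.map f0 (μr.prod μN) := by
    have h1 : (fun ω => ‖Y ω‖)
        = Prod.fst ∘ fun ω => (‖Y ω‖, Complex.arg (Y ω)) := rfl
    rw [h1, ← Measure.map_map measurable_fst hpairm, hfinal, Measure.map_fst_prod,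
      measure_univ, one_smul]
  rw [habs, hfinal]
end

section
/- Define I₀(β) = (1/(2π)) ∫₀^{2π} exp(β cos θ) dθ for β ∈ ℝ. Then for every z ∈ ℝ and every n ∈ ℕ: ∫₀^∞ e^{-ν - z²/2} · I₀(z·√(2ν)) · ν^n dν = n! · ∑_{m=0}^{n} (n choose m) · (z²/2)^m / m!. -/
open MeasureTheory Real Nat

lemma lag_exp_tsum (x : ℝ) : Real.exp x = ∑' j : ℕ, x ^ j / j ! := by
  rw [Real.exp_eq_exp_ℝ, NormedSpace.exp_eq_tsum_div]

lemma lag_choose_le_two_pow (n k : ℕ) : n.choose k ≤ 2 ^ n := by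
  rcases le_or_gt k n with h | h
  · calc n.choose k ≤ ∑ m ∈ Finset.range (n + 1), n.choose m :=
        Finset.single_le_sum (fun _ _ => Nat.zero_le _) (Finset.mem_range.mpr (by omega))
      _ = 2 ^ n := Nat.sum_range_choose n
  · simp [Nat.choose_eq_zero_of_lt h]

lemma lag_cos_even (k : ℕ) :
    (∫ θ in (0:ℝ)..(2*π), Real.cos θ ^ (2*k)) = 2*π * (2*k)! / (4^k * ((k ! : ℝ))^2) := by
  induction k with
  | zero => simp
  | succ k ih =>
    have h2 : 2*(k+1) = 2*k + 2 := by ring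
    rw [h2, integral_cos_pow, ih]
    rw [Real.sin_two_pi, Real.sin_zero]
    have e1 : (2*k+2)! = (2*k+2) * ((2*k+1) * (2*k)!) := by
      rw [show 2*k+2 = (2*k+1)+1 from rfl, Nat.factorial_succ, Nat.factorial_succ]
    have e2 : ((k+1)! : ℝ) = (k+1) * k ! := by exact_mod_cast Nat.factorial_succ k
    have hf : ((2*k)! : ℝ) ≠ 0 := by positivity
    have hk : ((k)! : ℝ) ≠ 0 := by positivity
    rw [e1]
    push_cast
    rw [e2]
    field_simp
    ring

lemma lag_cos_odd (k : ℕ) :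
    (∫ θ in (0:ℝ)..(2*π), Real.cos θ ^ (2*k+1)) = 0 := by
  induction k with
  | zero => simp
  | succ k ih =>
    have h2 : 2*(k+1)+1 = (2*k+1) + 2 := by ring
    rw [h2, integral_cos_pow, ih]
    rw [Real.sin_two_pi, Real.sin_zero]
    ring


lemma lag_besselI0_hasSum (β : ℝ) :
    HasSum (fun k : ℕ => β ^ (2*k) / (4 ^ k * ((k ! : ℝ))^2)) (besselI0 β) := by
  set μ := volume.restrict (Set.Ioc (0:ℝ) (2*π)) with hμ
  set F : ℕ → ℝ → ℝ := fun j θ => (β * Real.cos θ) ^ j / j ! with hF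
  have hcont : ∀ j, Continuous (F j) := by
    intro j; fun_prop
  have hint : ∀ j, Integrable (F j) μ := fun j =>
    (hcont j).integrableOn_Ioc
  have hbound : ∀ j, (∫ θ, ‖F j θ‖ ∂μ) ≤ (2*π) * (|β| ^ j / j !) := by
    intro j
    have h1 : ∀ θ, ‖F j θ‖ ≤ |β| ^ j / j ! := by
      intro θ
      have hb : |β * Real.cos θ| ≤ |β| := by
        rw [abs_mul]
        calc |β| * |Real.cos θ| ≤ |β| * 1 :=
              mul_le_mul_of_nonneg_left (Real.abs_cos_le_one θ) (abs_nonneg β)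
          _ = |β| := mul_one _
      rw [hF]
      simp only [norm_div, norm_pow, Real.norm_eq_abs, Nat.abs_cast]
      gcongr
    calc (∫ θ, ‖F j θ‖ ∂μ) ≤ ∫ _, (|β| ^ j / j !) ∂μ :=
          integral_mono ((hint j).norm) (integrable_const _) h1
      _ = (2*π) * (|β| ^ j / j !) := by
          rw [integral_const, hμ, measureReal_restrict_apply_univ, measureReal_def, Real.volume_Ioc]
          rw [ENNReal.toReal_ofReal (by nlinarith [Real.pi_pos] : (0:ℝ) ≤ 2*π - 0)]
          simp [smul_eq_mul]
  have hsum : Summable fun j => ∫ θ, ‖F j θ‖ ∂μ := by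
    apply Summable.of_nonneg_of_le (fun j => integral_nonneg (fun θ => norm_nonneg _)) hbound
    exact (Real.summable_pow_div_factorial |β|).mul_left _
  have H : HasSum (fun j => ∫ θ, F j θ ∂μ) (∫ θ, (∑' j, F j θ) ∂μ) :=
    MeasureTheory.hasSum_integral_of_summable_integral_norm hint hsum
  have htsum : ∀ θ : ℝ, (∑' j, F j θ) = Real.exp (β * Real.cos θ) := by
    intro θ; rw [lag_exp_tsum]
  rw [show (∫ θ, (∑' j, F j θ) ∂μ) = ∫ θ, Real.exp (β * Real.cos θ) ∂μ from
      integral_congr_ae (Filter.Eventually.of_forall htsum)] at H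
  have hterm : ∀ j, (∫ θ, F j θ ∂μ) = β ^ j / j ! * ∫ θ in (0:ℝ)..(2*π), Real.cos θ ^ j := by
    intro j
    rw [intervalIntegral.integral_of_le Real.two_pi_pos.le, ← integral_const_mul]
    apply integral_congr_ae (Filter.Eventually.of_forall _)
    intro θ
    rw [hF]
    simp only [mul_pow]
    ring
  have Hexp : (∫ θ, Real.exp (β * Real.cos θ) ∂μ) = 2 * π * besselI0 β := by
    rw [besselI0, hμ, ← intervalIntegral.integral_of_le Real.two_pi_pos.le]
    field_simp
  rw [Hexp] at H
  have hodd : ∀ j ∉ Set.range (fun k : ℕ => 2*k), (∫ θ, F j θ ∂μ) = 0 := by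
    intro j hj
    have hne : ¬ Even j := by
      rintro ⟨r, hr⟩
      exact hj ⟨r, by dsimp; omega⟩
    obtain ⟨r, hr⟩ := Nat.odd_iff.mpr (Nat.not_even_iff.mp hne)
    rw [hterm j, hr, lag_cos_odd, mul_zero]
  have hinj : Function.Injective (fun k : ℕ => 2*k) := fun a b h => by dsimp at h; omega
  have H2 : HasSum ((fun j => ∫ θ, F j θ ∂μ) ∘ fun k : ℕ => 2*k) (2 * π * besselI0 β) :=
    (Function.Injective.hasSum_iff hinj hodd).mpr H
  have heval : ((fun j => ∫ θ, F j θ ∂μ) ∘ fun k : ℕ => 2*k)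
      = fun k => 2*π * (β ^ (2*k) / (4 ^ k * ((k ! : ℝ))^2)) := by
    funext k
    simp only [Function.comp_apply]
    rw [hterm, lag_cos_even]
    have h1 : ((2*k)! : ℝ) ≠ 0 := by positivity
    have h2 : ((k)! : ℝ) ≠ 0 := by positivity
    field_simp
  rw [heval] at H2
  have H3 := H2.mul_left (1/(2*π))
  have hpi : (2:ℝ) * π ≠ 0 := by positivity
  have h4 : (fun k => (1/(2*π)) * (2*π * (β ^ (2*k) / (4 ^ k * ((k ! : ℝ))^2))))
      = fun k => β ^ (2*k) / (4 ^ k * ((k ! : ℝ))^2) := by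
    funext k; field_simp
  have h5 : (1/(2*π)) * (2*π*besselI0 β) = besselI0 β := by field_simp
  rwa [h4, h5] at H3

lemma lag_integrableOn_exp_neg_pow (m : ℕ) :
    IntegrableOn (fun ν : ℝ => Real.exp (-ν) * ν ^ m) (Set.Ioi (0:ℝ)) := by
  have h := Real.GammaIntegral_convergent (s := (m+1:ℝ)) (by positivity)
  apply h.congr_fun _ measurableSet_Ioi
  intro x hx
  simp only [show ((m:ℝ)+1) - 1 = (m:ℝ) by ring, Real.rpow_natCast]

lemma lag_integral_exp_neg_pow (m : ℕ) :
    (∫ ν in Set.Ioi (0:ℝ), Real.exp (-ν) * ν ^ m) = (m ! : ℝ) := by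
  have h := Real.Gamma_eq_integral (s := (m+1:ℝ)) (by positivity)
  rw [show ((m:ℝ)+1) = ((m:ℕ):ℝ)+1 by norm_num, Real.Gamma_nat_eq_factorial] at h
  rw [h]
  apply setIntegral_congr_fun measurableSet_Ioi
  intro x hx
  simp only [show ((m:ℝ)+1) - 1 = (m:ℝ) by ring, Real.rpow_natCast]

lemma lag_fact_sq (n k : ℕ) :
    ((n+k)! : ℝ) / ((k ! : ℝ))^2 = ((k+n).choose k : ℝ) * n ! / k ! := by
  have h := Nat.choose_mul_factorial_mul_factorial (show k ≤ k + n by omega)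
  rw [Nat.add_sub_cancel_left] at h
  rw [show k + n = n + k by omega] at h
  have h2 : ((n+k).choose k : ℝ) * k ! * n ! = (n+k)! := by exact_mod_cast h
  have hk : ((k)! : ℝ) ≠ 0 := by positivity
  rw [show k + n = n + k by omega, ← h2]
  field_simp

lemma lag_key_sum (x : ℝ) (n : ℕ) :
    (∑' k : ℕ, x ^ k * ((n+k)! : ℝ) / ((k ! : ℝ))^2) =
      Real.exp x * ∑ m ∈ Finset.range (n+1), (n.choose m : ℝ) * n ! * x ^ m / m ! := by
  set a : ℕ → ℝ := fun i => x ^ i / i ! with ha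
  set b : ℕ → ℝ := fun j => (n.choose j : ℝ) * n ! * x ^ j / j ! with hb
  have hbz : ∀ j ∉ Finset.range (n+1), b j = 0 := by
    intro j hj
    have hnj : n < j := by simpa [Finset.mem_range, Nat.lt_succ_iff] using hj
    simp [hb, Nat.choose_eq_zero_of_lt hnj]
  have hasumm : Summable fun i => ‖a i‖ := by
    apply ((Real.summable_pow_div_factorial |x|).congr _)
    intro i
    rw [ha]
    simp [abs_div, abs_pow, Nat.abs_cast]
  have hbsumm : Summable fun j => ‖b j‖ :=
    summable_of_ne_finset_zero (s := Finset.range (n+1))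
      (fun j hj => by rw [hbz j hj, norm_zero])
  have hcauchy := tsum_mul_tsum_eq_tsum_sum_antidiagonal_of_summable_norm hasumm hbsumm
  have hta : (∑' i, a i) = Real.exp x := (lag_exp_tsum x).symm
  have htb : (Finset.range (n+1)).sum b = ∑' j, b j := (tsum_eq_sum hbz).symm
  rw [htb, ← hta, hcauchy]
  apply tsum_congr
  intro k
  rw [Finset.Nat.sum_antidiagonal_eq_sum_range_succ_mk]
  have hterm : ∀ i ∈ Finset.range (k+1),
      a i * b (k-i) = (n ! : ℝ) / k ! * ((k.choose i : ℝ) * ((n.choose (k-i) : ℝ))) * x ^ k := by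
    intro i hi
    have hik : i ≤ k := by simpa [Nat.lt_succ_iff] using Finset.mem_range.mp hi
    have hch : ((k.choose i : ℝ)) * i ! * (k-i)! = k ! := by
      exact_mod_cast Nat.choose_mul_factorial_mul_factorial hik
    have hxp : x ^ i * x ^ (k-i) = x ^ k := by
      rw [← pow_add, Nat.add_sub_cancel' hik]
    have h1 : ((i)! : ℝ) ≠ 0 := by positivity
    have h2 : (((k-i))! : ℝ) ≠ 0 := by positivity
    have h3 : ((k)! : ℝ) ≠ 0 := by positivity
    have hci : ((k.choose i : ℝ)) = k ! / (i ! * (k-i)!) := by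
      rw [eq_div_iff (by positivity)]
      linear_combination hch
    rw [ha, hb]
    dsimp only
    rw [← hxp, hci]
    field_simp
  rw [Finset.sum_congr rfl hterm, ← Finset.sum_mul, ← Finset.mul_sum]
  have hnat : (∑ i ∈ Finset.range (k+1), k.choose i * n.choose (k-i)) = (k+n).choose k := by
    rw [Nat.add_choose_eq, Finset.Nat.sum_antidiagonal_eq_sum_range_succ_mk]
  have hvand : (∑ i ∈ Finset.range (k+1), (k.choose i : ℝ) * (n.choose (k-i) : ℝ))
      = ((k+n).choose k : ℝ) := by exact_mod_cast hnat
  rw [hvand]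
  have hfact := Nat.choose_mul_factorial_mul_factorial (show k ≤ k + n by omega)
  rw [Nat.add_sub_cancel_left] at hfact
  have h2 : ((k+n).choose k : ℝ) * k ! * n ! = ((k+n)! : ℝ) := by exact_mod_cast hfact
  have hk : ((k)!:ℝ) ≠ 0 := by positivity
  rw [show n + k = k + n by omega, ← h2]
  field_simp

/-- Integral-transform identity of Appendix H: the kernel
`Q(ν, z) = e^{-ν - z²/2} I₀(z√(2ν))` maps `ν^n` to
`n! ∑_{m=0}^n (n choose m) (z²/2)^m / m!` (i.e. `n!·L_n(-z²/2)`). -/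
theorem laguerre_integral_transform (z : ℝ) (n : ℕ) :
    (∫ ν in Set.Ioi (0 : ℝ),
        Real.exp (-ν - z ^ 2 / 2) * besselI0 (z * Real.sqrt (2 * ν)) * ν ^ n) =
      (Nat.factorial n : ℝ) *
        ∑ m ∈ Finset.range (n + 1),
          (Nat.choose n m : ℝ) * (z ^ 2 / 2) ^ m / (Nat.factorial m : ℝ) := by
  set x : ℝ := z ^ 2 / 2 with hx
  have hx0 : (0:ℝ) ≤ x := by rw [hx]; positivity
  set G : ℕ → ℝ → ℝ :=
    fun k ν => (Real.exp (-x) * x ^ k / ((k ! : ℝ))^2) * (Real.exp (-ν) * ν ^ (n+k)) with hG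
  -- pointwise expansion
  have hpt : ∀ ν ∈ Set.Ioi (0:ℝ),
      Real.exp (-ν - x) * besselI0 (z * Real.sqrt (2*ν)) * ν ^ n = ∑' k, G k ν := by
    intro ν hν
    have hν0 : (0:ℝ) ≤ 2*ν := by
      have : (0:ℝ) < ν := hν
      linarith
    have hb := lag_besselI0_hasSum (z * Real.sqrt (2*ν))
    have h2 : HasSum
        (fun k => Real.exp (-ν - x) *
          ((z * Real.sqrt (2*ν)) ^ (2*k) / (4^k * ((k ! : ℝ))^2)) * ν ^ n)
        (Real.exp (-ν - x) * besselI0 (z * Real.sqrt (2*ν)) * ν ^ n) :=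
      (hb.mul_left _).mul_right _
    have h3 : (fun k => Real.exp (-ν - x) *
          ((z * Real.sqrt (2*ν)) ^ (2*k) / (4^k * ((k ! : ℝ))^2)) * ν ^ n)
        = fun k => G k ν := by
      funext k
      rw [hG]
      dsimp only
      rw [pow_mul, mul_pow, Real.sq_sqrt hν0]
      rw [show z ^ 2 * (2*ν) = 4 * (x * ν) by rw [hx]; ring]
      rw [show -ν - x = -ν + -x by ring, Real.exp_add]
      rw [mul_pow 4 (x*ν) k, mul_pow x ν k, pow_add]
      have h4 : ((4:ℝ))^k ≠ 0 := by positivity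
      have h5 : ((k ! : ℝ))^2 ≠ 0 := by positivity
      field_simp
    rw [h3] at h2
    exact h2.tsum_eq.symm
  have hLHS : (∫ ν in Set.Ioi (0:ℝ),
        Real.exp (-ν - x) * besselI0 (z * Real.sqrt (2*ν)) * ν ^ n)
      = ∫ ν in Set.Ioi (0:ℝ), ∑' k, G k ν :=
    setIntegral_congr_fun measurableSet_Ioi hpt
  -- integrability and values
  have hGint : ∀ k, Integrable (G k) (volume.restrict (Set.Ioi (0:ℝ))) := by
    intro k
    exact (lag_integrableOn_exp_neg_pow (n+k)).const_mul _
  have hGval : ∀ k, (∫ ν in Set.Ioi (0:ℝ), G k ν)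
      = Real.exp (-x) * x ^ k / ((k ! : ℝ))^2 * ((n+k)! : ℝ) := by
    intro k
    rw [hG]
    dsimp only
    rw [integral_const_mul, lag_integral_exp_neg_pow]
  have hGnorm : ∀ k, (∫ ν in Set.Ioi (0:ℝ), ‖G k ν‖)
      = ∫ ν in Set.Ioi (0:ℝ), G k ν := by
    intro k
    apply setIntegral_congr_fun measurableSet_Ioi
    intro ν hν
    have hν0 : (0:ℝ) ≤ ν := le_of_lt hν
    apply Real.norm_of_nonneg
    apply mul_nonneg
    · apply div_nonneg (mul_nonneg (Real.exp_pos _).le (pow_nonneg hx0 _)) (by positivity)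
    · exact mul_nonneg (Real.exp_pos _).le (pow_nonneg hν0 _)
  -- summability of values
  set S : ℕ → ℝ := fun k => Real.exp (-x) * x ^ k / ((k ! : ℝ))^2 * ((n+k)! : ℝ) with hS
  have hSle : ∀ k, S k ≤ Real.exp (-x) * (2^n * (n ! : ℝ)) * ((2*x)^k / k !) := by
    intro k
    have h1 : (((k+n).choose k : ℕ) : ℝ) ≤ 2^(k+n) := by
      exact_mod_cast lag_choose_le_two_pow (k+n) k
    have e : S k = Real.exp (-x) * x ^ k * (((n+k)! : ℝ) / ((k ! : ℝ))^2) := by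
      rw [hS]; ring
    rw [e, lag_fact_sq]
    have hkf : (0:ℝ) < (k ! : ℝ) := by positivity
    calc Real.exp (-x) * x ^ k * (((k+n).choose k : ℝ) * n ! / k !)
        ≤ Real.exp (-x) * x ^ k * ((2:ℝ)^(k+n) * n ! / k !) := by
          gcongr
      _ = Real.exp (-x) * (2^n * (n ! : ℝ)) * ((2*x)^k / k !) := by
          rw [pow_add, mul_pow]
          ring
  have hSnonneg : ∀ k, 0 ≤ S k := by
    intro k
    rw [hS]
    apply mul_nonneg _ (by positivity)
    apply div_nonneg (mul_nonneg (Real.exp_pos _).le (pow_nonneg hx0 _)) (by positivity)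
  have hSsum : Summable S :=
    Summable.of_nonneg_of_le hSnonneg hSle
      ((Real.summable_pow_div_factorial (2*x)).mul_left _)
  have hnorm_sum : Summable fun k => ∫ ν in Set.Ioi (0:ℝ), ‖G k ν‖ := by
    apply hSsum.congr
    intro k
    rw [hGnorm, hGval]
  have H := MeasureTheory.hasSum_integral_of_summable_integral_norm hGint hnorm_sum
  have Hval : (∫ ν in Set.Ioi (0:ℝ), ∑' k, G k ν) = ∑' k, S k := by
    rw [← H.tsum_eq]
    exact tsum_congr hGval
  rw [hLHS, Hval]
  have hSe : S = fun k => Real.exp (-x) * (x ^ k * ((n+k)! : ℝ) / ((k ! : ℝ))^2) := by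
    funext k; rw [hS]; ring
  rw [hSe, tsum_mul_left, lag_key_sum, ← mul_assoc, ← Real.exp_add]
  rw [show -x + x = 0 by ring, Real.exp_zero, one_mul, Finset.mul_sum]
  apply Finset.sum_congr rfl
  intro m _
  ring
end
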